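/- Let f : ℝ × ℂ^p → ℂ^p be bounded, continuous, almost automorphic uniformly on compact subsets of ℂ^p, and uniformly continuous on compact subsets of ℂ^p uniformly in t ∈ ℝ (i.e. for every compact K ⊆ ℂ^p and ε > 0 there is δ > 0 such that |f(t,x) − f(t,y)| < ε for all t ∈ ℝ and all x, y ∈ K with |x − y| < δ). If ψ : ℝ → ℂ^p is Z-almost automorphic, then the function t ↦ f(t, ψ(t)) is Z-almost automorphic. -/

import Mathlib

open MeasureTheory Filter Topology

/-- Bounded, piecewise continuous: continuous on ℝ ∖ ℤ with finite one-sided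
limits at every integer. -/
def BddPC (p : ℕ) (f : ℝ → Fin p → ℂ) : Prop :=
  (∃ C : ℝ, ∀ t : ℝ, ‖f t‖ ≤ C) ∧
  ContinuousOn f {t : ℝ | ∀ n : ℤ, t ≠ (n : ℝ)} ∧
  ∀ n : ℤ, (∃ L : Fin p → ℂ, Tendsto f (𝓝[<] (n : ℝ)) (𝓝 L)) ∧
           (∃ R : Fin p → ℂ, Tendsto f (𝓝[>] (n : ℝ)) (𝓝 R))

/-- `ℤ`-almost automorphic functions. -/
def ZAlmostAutomorphic (p : ℕ) (f : ℝ → Fin p → ℂ) : Prop :=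
  BddPC p f ∧
  ∀ s : ℕ → ℤ, ∃ (φ : ℕ → ℕ) (g : ℝ → Fin p → ℂ), StrictMono φ ∧
    (∀ t : ℝ, Tendsto (fun n => f (t + (s (φ n) : ℝ))) atTop (𝓝 (g t))) ∧
    (∀ t : ℝ, Tendsto (fun n => g (t - (s (φ n) : ℝ))) atTop (𝓝 (f t)))

/-- Almost automorphic functions in the sense of Bochner. -/
def AlmostAutomorphic (p : ℕ) (f : ℝ → Fin p → ℂ) : Prop :=
  (∃ C : ℝ, ∀ t : ℝ, ‖f t‖ ≤ C) ∧ Continuous f ∧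
  ∀ s : ℕ → ℝ, ∃ (φ : ℕ → ℕ) (g : ℝ → Fin p → ℂ), StrictMono φ ∧
    (∀ t : ℝ, Tendsto (fun n => f (t + s (φ n))) atTop (𝓝 (g t))) ∧
    (∀ t : ℝ, Tendsto (fun n => g (t - s (φ n))) atTop (𝓝 (f t)))

/-- Almost automorphy, uniformly on compact subsets of `ℂ^p`, for a function of
two variables `f : ℝ × ℂ^p → ℂ^p`. -/
def AAUniformOnCompact (p : ℕ) (f : ℝ → (Fin p → ℂ) → Fin p → ℂ) : Prop :=
  ∀ K : Set (Fin p → ℂ), IsCompact K → ∀ s : ℕ → ℝ,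
    ∃ (φ : ℕ → ℕ) (g : ℝ → (Fin p → ℂ) → Fin p → ℂ), StrictMono φ ∧
      (∀ t : ℝ, ∀ x ∈ K, Tendsto (fun n => f (t + s (φ n)) x) atTop (𝓝 (g t x))) ∧
      (∀ t : ℝ, ∀ x ∈ K, Tendsto (fun n => g (t - s (φ n)) x) atTop (𝓝 (f t x)))

/-- If `f : ℝ × ℂ^p → ℂ^p` is bounded, continuous, almost automorphic uniformly on
compact subsets of `ℂ^p` and uniformly continuous on compact subsets of `ℂ^p`
uniformly in `t ∈ ℝ`, and `ψ` is `ℤ`-almost automorphic, then `t ↦ f (t, ψ t)` is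
`ℤ`-almost automorphic. -/
theorem zAlmostAutomorphic_superposition {p : ℕ}
    (f : ℝ → (Fin p → ℂ) → Fin p → ℂ)
    (hbdd : ∃ C : ℝ, ∀ (t : ℝ) (x : Fin p → ℂ), ‖f t x‖ ≤ C)
    (hcont : Continuous fun q : ℝ × (Fin p → ℂ) => f q.1 q.2)
    (haa : AAUniformOnCompact p f)
    (huc : ∀ K : Set (Fin p → ℂ), IsCompact K → ∀ ε > (0 : ℝ), ∃ δ > (0 : ℝ),
      ∀ t : ℝ, ∀ x ∈ K, ∀ y ∈ K, ‖x - y‖ < δ → ‖f t x - f t y‖ < ε)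
    (ψ : ℝ → Fin p → ℂ) (hψ : ZAlmostAutomorphic p ψ) :
    ZAlmostAutomorphic p (fun t : ℝ => f t (ψ t)) := by
  obtain ⟨⟨⟨C, hC⟩, hψcont, hψlim⟩, hψaa⟩ := hψ
  obtain ⟨D, hD⟩ := hbdd
  constructor
  · refine ⟨⟨D, fun t => hD t (ψ t)⟩, ?_, ?_⟩
    · exact hcont.comp_continuousOn (continuousOn_id.prodMk hψcont)
    · intro n
      obtain ⟨⟨L, hL⟩, ⟨R, hR⟩⟩ := hψlim n
      constructor
      · exact ⟨f n L, (hcont.tendsto ((n : ℝ), L)).comp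
          ((tendsto_id.mono_left nhdsWithin_le_nhds).prodMk_nhds hL)⟩
      · exact ⟨f n R, (hcont.tendsto ((n : ℝ), R)).comp
          ((tendsto_id.mono_left nhdsWithin_le_nhds).prodMk_nhds hR)⟩
  · intro s
    set K : Set (Fin p → ℂ) := Metric.closedBall 0 C with hKdef
    have hKc : IsCompact K := isCompact_closedBall 0 C
    have hψK : ∀ t, ψ t ∈ K := fun t => by
      simpa [hKdef, mem_closedBall_zero_iff] using hC t
    obtain ⟨φ₁, ψg, hφ₁, hψ1, hψ2⟩ := hψaa s
    obtain ⟨φ₂, fg, hφ₂, hf1, hf2⟩ := haa K hKc (fun n => (s (φ₁ n) : ℝ))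
    have hψgK : ∀ t, ψg t ∈ K := fun t =>
      hKc.isClosed.mem_of_tendsto (hψ1 t)
        (Filter.Eventually.of_forall fun n => hψK _)
    refine ⟨φ₁ ∘ φ₂, fun t => fg t (ψg t), hφ₁.comp hφ₂, ?_, ?_⟩
    · intro t
      rw [Metric.tendsto_nhds]
      intro ε hε
      obtain ⟨δ, hδ, hδf⟩ := huc K hKc (ε / 2) (by positivity)
      have h1 := Metric.tendsto_nhds.mp ((hψ1 t).comp hφ₂.tendsto_atTop) δ hδ
      have h2 := Metric.tendsto_nhds.mp (hf1 t (ψg t) (hψgK t)) (ε / 2) (by positivity)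
      filter_upwards [h1, h2] with n hn1 hn2
      have hA : ‖ψ (t + (s (φ₁ (φ₂ n)) : ℝ)) - ψg t‖ < δ := by
        rw [← dist_eq_norm]; exact hn1
      calc dist (f (t + (s (φ₁ (φ₂ n)) : ℝ)) (ψ (t + (s (φ₁ (φ₂ n)) : ℝ)))) (fg t (ψg t))
          ≤ dist (f (t + (s (φ₁ (φ₂ n)) : ℝ)) (ψ (t + (s (φ₁ (φ₂ n)) : ℝ))))
              (f (t + (s (φ₁ (φ₂ n)) : ℝ)) (ψg t))
            + dist (f (t + (s (φ₁ (φ₂ n)) : ℝ)) (ψg t)) (fg t (ψg t)) := dist_triangle _ _ _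
        _ < ε / 2 + ε / 2 := by
            refine add_lt_add ?_ hn2
            rw [dist_eq_norm]
            exact hδf _ _ (hψK _) _ (hψgK t) hA
        _ = ε := add_halves ε
    · intro t
      rw [Metric.tendsto_nhds]
      intro ε hε
      obtain ⟨δ, hδ, hδf⟩ := huc K hKc (ε / 3) (by positivity)
      have hfgU : ∀ u x y, x ∈ K → y ∈ K → ‖x - y‖ < δ → ‖fg u x - fg u y‖ ≤ ε / 3 := by
        intro u x y hx hy hxy
        have hlim := ((hf1 u x hx).sub (hf1 u y hy)).norm
        exact le_of_tendsto hlim (Filter.Eventually.of_forall fun n =>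
          (hδf _ _ hx _ hy hxy).le)
      have hψgK2 : ∀ u, ψg u ∈ K := hψgK
      have h1 := Metric.tendsto_nhds.mp ((hψ2 t).comp hφ₂.tendsto_atTop) δ hδ
      have h2 := Metric.tendsto_nhds.mp (hf2 t (ψ t) (hψK t)) (ε / 3) (by positivity)
      filter_upwards [h1, h2] with n hn1 hn2
      have hA : ‖ψg (t - (s (φ₁ (φ₂ n)) : ℝ)) - ψ t‖ < δ := by
        rw [← dist_eq_norm]; exact hn1
      calc dist (fg (t - (s (φ₁ (φ₂ n)) : ℝ)) (ψg (t - (s (φ₁ (φ₂ n)) : ℝ)))) (f t (ψ t))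
          ≤ dist (fg (t - (s (φ₁ (φ₂ n)) : ℝ)) (ψg (t - (s (φ₁ (φ₂ n)) : ℝ))))
              (fg (t - (s (φ₁ (φ₂ n)) : ℝ)) (ψ t))
            + dist (fg (t - (s (φ₁ (φ₂ n)) : ℝ)) (ψ t)) (f t (ψ t)) := dist_triangle _ _ _
        _ ≤ ε / 3 + ε / 3 := by
            refine add_le_add ?_ hn2.le
            rw [dist_eq_norm]
            exact hfgU _ _ _ (hψgK2 _) (hψK t) hA
        _ < ε := by linarith
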